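/- Let α, β, θ, γ > 0. Suppose w₁, w₂, y₁, y₂ : [0,∞) → ℝ are continuous functions satisfying y_i(t) = w_i(t) − θ∫₀ᵗ y_i⁺(s) ds + γ∫₀ᵗ y_i⁻(s) ds for all t ≥ 0 (i = 1, 2). Then for every t ≥ 0, sup_{s∈[0,t]} |y₁(s) − y₂(s)| ≤ e^{(θ+γ)t} · sup_{s∈[0,t]} |w₁(s) − w₂(s)|. -/

import Mathlib

/-- The sup of `|f|` over the interval `[0, t]`. -/
noncomputable def supNorm (f : ℝ → ℝ) (t : ℝ) : ℝ :=
  sSup ((fun s => |f s|) '' Set.Icc 0 t)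

/-- For `α, β, θ, γ > 0`, if `y_i(t) = w_i(t) - θ∫₀ᵗ y_i⁺(s) ds
+ γ∫₀ᵗ y_i⁻(s) ds` for `i = 1, 2`, then for all `t ≥ 0`,
`sup_{s ∈ [0,t]} |y₁(s) - y₂(s)| ≤ e^{(θ+γ)t} · sup_{s ∈ [0,t]} |w₁(s) - w₂(s)|`. -/
theorem stmt_12 (α β θ γ : ℝ) (hα : 0 < α) (hβ : 0 < β) (hθ : 0 < θ) (hγ : 0 < γ)
    (w₁ w₂ y₁ y₂ : ℝ → ℝ)
    (hw₁ : ContinuousOn w₁ (Set.Ici 0)) (hw₂ : ContinuousOn w₂ (Set.Ici 0))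
    (hy₁ : ContinuousOn y₁ (Set.Ici 0)) (hy₂ : ContinuousOn y₂ (Set.Ici 0))
    (heq₁ : ∀ t : ℝ, 0 ≤ t →
      y₁ t = w₁ t - θ * (∫ s in (0:ℝ)..t, max (y₁ s) 0)
        + γ * (∫ s in (0:ℝ)..t, max (-y₁ s) 0))
    (heq₂ : ∀ t : ℝ, 0 ≤ t →
      y₂ t = w₂ t - θ * (∫ s in (0:ℝ)..t, max (y₂ s) 0)
        + γ * (∫ s in (0:ℝ)..t, max (-y₂ s) 0)) :
    ∀ t : ℝ, 0 ≤ t →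
      supNorm (fun s => y₁ s - y₂ s) t
        ≤ Real.exp ((θ + γ) * t) * supNorm (fun s => w₁ s - w₂ s) t := by
  intro t ht
  set K := θ + γ with hKdef
  have hK : 0 < K := add_pos hθ hγ
  set Δ : ℝ → ℝ := fun s => y₁ s - y₂ s with hΔdef
  set D : ℝ → ℝ := fun s => w₁ s - w₂ s with hDdef
  have hΔc : ContinuousOn Δ (Set.Ici 0) := hy₁.sub hy₂
  have hDc : ContinuousOn D (Set.Ici 0) := hw₁.sub hw₂
  have hmcont : Continuous (fun s : ℝ => max s 0) := continuous_id.max continuous_const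
  have hmmem : ∀ s : ℝ, max s 0 ∈ Set.Ici (0:ℝ) := fun s => le_max_right s 0
  set φ : ℝ → ℝ := fun s => |Δ (max s 0)| with hφdef
  have hφc : Continuous φ := (hΔc.comp_continuous hmcont hmmem).abs
  have hφnn : ∀ s, 0 ≤ φ s := fun s => abs_nonneg _
  have hφeq : ∀ s : ℝ, 0 ≤ s → φ s = |Δ s| := by
    intro s hs; simp [hφdef, max_eq_left hs]
  set g : ℝ → ℝ := fun s => ∫ u in (0:ℝ)..s, φ u with hgdef
  have hg' : ∀ x : ℝ, HasDerivAt g (φ x) x := fun x =>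
    (hφc.integral_hasStrictDerivAt 0 x).hasDerivAt
  have hgnn : ∀ x : ℝ, 0 ≤ x → 0 ≤ g x := fun x hx =>
    intervalIntegral.integral_nonneg hx (fun u _ => hφnn u)
  set C := supNorm D t with hCdef
  have hbdd : BddAbove ((fun s => |D s|) '' Set.Icc 0 t) :=
    (isCompact_Icc.image_of_continuousOn
      ((hDc.mono (Set.Icc_subset_Ici_self)).abs)).bddAbove
  have hDle : ∀ s ∈ Set.Icc (0:ℝ) t, |D s| ≤ C := fun s hs =>
    le_csSup hbdd ⟨s, hs, rfl⟩
  have hC0 : 0 ≤ C := le_trans (abs_nonneg _) (hDle 0 ⟨le_refl 0, ht⟩)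
  -- integrability helpers
  have hInt : ∀ (f : ℝ → ℝ), ContinuousOn f (Set.Ici 0) → ∀ s : ℝ, 0 ≤ s →
      IntervalIntegrable f MeasureTheory.volume 0 s := fun f hf s hs =>
    (hf.mono Set.Icc_subset_Ici_self).intervalIntegrable_of_Icc hs
  have hy₁p : ContinuousOn (fun u => max (y₁ u) 0) (Set.Ici 0) :=
    fun x hx => (hy₁ x hx).max continuousWithinAt_const
  have hy₂p : ContinuousOn (fun u => max (y₂ u) 0) (Set.Ici 0) :=
    fun x hx => (hy₂ x hx).max continuousWithinAt_const
  have hy₁m : ContinuousOn (fun u => max (-y₁ u) 0) (Set.Ici 0) :=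
    fun x hx => ((hy₁ x hx).neg).max continuousWithinAt_const
  have hy₂m : ContinuousOn (fun u => max (-y₂ u) 0) (Set.Ici 0) :=
    fun x hx => ((hy₂ x hx).neg).max continuousWithinAt_const
  -- key pointwise inequality
  have key : ∀ s : ℝ, 0 ≤ s → |Δ s| ≤ C + K * g s → True := fun _ _ _ => trivial
  have key2 : ∀ s ∈ Set.Icc (0:ℝ) t, |Δ s| ≤ C + K * g s := by
    intro s hs
    have hs0 : (0:ℝ) ≤ s := hs.1
    have e1 := heq₁ s hs0
    have e2 := heq₂ s hs0
    have hΔeq : Δ s = D s - θ * ((∫ u in (0:ℝ)..s, max (y₁ u) 0)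
        - (∫ u in (0:ℝ)..s, max (y₂ u) 0))
        + γ * ((∫ u in (0:ℝ)..s, max (-y₁ u) 0)
        - (∫ u in (0:ℝ)..s, max (-y₂ u) 0)) := by
      simp only [hΔdef, hDdef, e1, e2]; ring
    have hsub1 : (∫ u in (0:ℝ)..s, max (y₁ u) 0) - (∫ u in (0:ℝ)..s, max (y₂ u) 0)
        = ∫ u in (0:ℝ)..s, (max (y₁ u) 0 - max (y₂ u) 0) :=
      (intervalIntegral.integral_sub (hInt _ hy₁p s hs0) (hInt _ hy₂p s hs0)).symm
    have hsub2 : (∫ u in (0:ℝ)..s, max (-y₁ u) 0) - (∫ u in (0:ℝ)..s, max (-y₂ u) 0)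
        = ∫ u in (0:ℝ)..s, (max (-y₁ u) 0 - max (-y₂ u) 0) :=
      (intervalIntegral.integral_sub (hInt _ hy₁m s hs0) (hInt _ hy₂m s hs0)).symm
    have hb1 : |∫ u in (0:ℝ)..s, (max (y₁ u) 0 - max (y₂ u) 0)| ≤ g s := by
      refine le_trans (intervalIntegral.abs_integral_le_integral_abs hs0) ?_
      apply intervalIntegral.integral_mono_on hs0
      · exact ((hInt _ (hy₁p.sub hy₂p) s hs0).abs)
      · exact hφc.intervalIntegrable 0 s
      · intro u hu
        rw [hφeq u hu.1]
        exact abs_max_sub_max_le_abs _ _ _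
    have hb2 : |∫ u in (0:ℝ)..s, (max (-y₁ u) 0 - max (-y₂ u) 0)| ≤ g s := by
      refine le_trans (intervalIntegral.abs_integral_le_integral_abs hs0) ?_
      apply intervalIntegral.integral_mono_on hs0
      · exact ((hInt _ (hy₁m.sub hy₂m) s hs0).abs)
      · exact hφc.intervalIntegrable 0 s
      · intro u hu
        rw [hφeq u hu.1]
        have := abs_max_sub_max_le_abs (-y₁ u) (-y₂ u) 0
        calc |max (-y₁ u) 0 - max (-y₂ u) 0| ≤ |(-y₁ u) - (-y₂ u)| := this
          _ = |Δ u| := by rw [show -y₁ u - -y₂ u = -(Δ u) by simp [hΔdef]; ring, abs_neg]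
    calc |Δ s| ≤ |D s| + θ * |∫ u in (0:ℝ)..s, (max (y₁ u) 0 - max (y₂ u) 0)|
          + γ * |∫ u in (0:ℝ)..s, (max (-y₁ u) 0 - max (-y₂ u) 0)| := by
            rw [hΔeq, hsub1, hsub2]
            refine le_trans (abs_add_le _ _) (add_le_add ?_ ?_)
            · refine le_trans (abs_sub _ _) (add_le_add_right ?_ _)
              rw [abs_mul, abs_of_pos hθ]
            · rw [abs_mul, abs_of_pos hγ]
      _ ≤ C + θ * g s + γ * g s := by
            refine add_le_add (add_le_add (hDle s hs) ?_) ?_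
            · exact mul_le_mul_of_nonneg_left hb1 hθ.le
            · exact mul_le_mul_of_nonneg_left hb2 hγ.le
      _ = C + K * g s := by rw [hKdef]; ring
  -- Gronwall for g
  have hgron : ∀ x ∈ Set.Icc (0:ℝ) t, g x ≤ C / K * (Real.exp (K * x) - 1) := by
    have H := norm_le_gronwallBound_of_norm_deriv_right_le
      (f := g) (f' := φ) (δ := 0) (K := K) (ε := C) (a := 0) (b := t)
      (fun x _ => (hg' x).continuousAt.continuousWithinAt)
      (fun x hx => (hg' x).hasDerivWithinAt)
      (by simp [hgdef])
      (fun x hx => by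
        rw [Real.norm_eq_abs, Real.norm_eq_abs, abs_of_nonneg (hφnn x),
          abs_of_nonneg (hgnn x hx.1), hφeq x hx.1]
        have := key2 x ⟨hx.1, hx.2.le⟩
        linarith)
    intro x hx
    have := H x hx
    rw [Real.norm_eq_abs, abs_of_nonneg (hgnn x hx.1), sub_zero,
      gronwallBound_of_K_ne_0 hK.ne'] at this
    simpa using this
  -- final bound pointwise
  have hfinal : ∀ s ∈ Set.Icc (0:ℝ) t, |Δ s| ≤ Real.exp (K * t) * C := by
    intro s hs
    have h1 := key2 s hs
    have h2 := hgron s hs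
    have h3 : C + K * (C / K * (Real.exp (K * s) - 1)) = C * Real.exp (K * s) := by
      field_simp
      ring
    have h4 : |Δ s| ≤ C * Real.exp (K * s) := by
      calc |Δ s| ≤ C + K * g s := h1
        _ ≤ C + K * (C / K * (Real.exp (K * s) - 1)) := by
            exact add_le_add_right (mul_le_mul_of_nonneg_left h2 hK.le) _
        _ = C * Real.exp (K * s) := h3
    calc |Δ s| ≤ C * Real.exp (K * s) := h4
      _ ≤ C * Real.exp (K * t) := by
          apply mul_le_mul_of_nonneg_left _ hC0
          exact Real.exp_le_exp.2 (mul_le_mul_of_nonneg_left hs.2 hK.le)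
      _ = Real.exp (K * t) * C := mul_comm _ _
  -- conclude
  apply Real.sSup_le
  · rintro x ⟨s, hs, rfl⟩
    exact hfinal s hs
  · positivity
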